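/- Let Γ be a finite directed graph and let L be a closed inverse subsemigroup of S(Γ) of infinite chain type. Then L has infinite index in S(Γ): there are infinitely many distinct right cosets of L. -/

import Mathlib

/-- A (finite) directed graph: vertices, edges, and source/target maps. -/
structure DGraph where
  V : Type
  E : Type
  src : E → V
  tgt : E → V

namespace DGraph

/-- The vertex reached after traversing a list of edges from a vertex. -/
def walkEnd (G : DGraph) : G.V → List G.E → G.V
  | v, [] => v
  | _, e :: l => walkEnd G (G.tgt e) l

/-- The list of edges forms a directed walk starting at the given vertex. -/
def IsWalk (G : DGraph) : G.V → List G.E → Prop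
  | _, [] => True
  | v, e :: l => G.src e = v ∧ IsWalk G (G.tgt e) l

variable (G : DGraph)

@[simp] theorem walkEnd_nil (v : G.V) : G.walkEnd v [] = v := rfl
@[simp] theorem walkEnd_cons (v : G.V) (e : G.E) (l : List G.E) :
    G.walkEnd v (e :: l) = G.walkEnd (G.tgt e) l := rfl
@[simp] theorem isWalk_nil (v : G.V) : G.IsWalk v [] := trivial
@[simp] theorem isWalk_cons (v : G.V) (e : G.E) (l : List G.E) :
    G.IsWalk v (e :: l) ↔ G.src e = v ∧ G.IsWalk (G.tgt e) l := Iff.rfl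

theorem isWalk_append (v : G.V) (l1 l2 : List G.E) :
    G.IsWalk v (l1 ++ l2) ↔ G.IsWalk v l1 ∧ G.IsWalk (G.walkEnd v l1) l2 := by
  induction l1 generalizing v with
  | nil => simp [IsWalk, walkEnd]
  | cons e l ih => simp [IsWalk, walkEnd, ih, and_assoc]

/-- A directed path in `G`: an initial vertex together with a compatible
list of edges, traversed in order (empty paths are allowed). -/
structure DPath (G : DGraph) where
  first : G.V
  edges : List G.E
  wf : G.IsWalk first edges

namespace DPath

variable {G}

/-- The terminal vertex of a directed path. -/
def last (p : G.DPath) : G.V := G.walkEnd p.first p.edges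

/-- The list of vertices lying on a directed path. -/
def vertexList (p : G.DPath) : List G.V := p.first :: p.edges.map G.tgt

/-- `q` is a suffix (terminal segment) of `p`: `p = l ⬝ q` for some edge list `l`. -/
def IsSuffixOf (q p : G.DPath) : Prop :=
  ∃ l : List G.E, p.edges = l ++ q.edges ∧ q.first = G.walkEnd p.first l

end DPath

theorem isWalk_chopAppend {u v w : G.DPath} (hs : v.IsSuffixOf u) (hvw : v.first = w.first) :
    G.IsWalk u.first (u.edges.take (u.edges.length - v.edges.length) ++ w.edges) := by
  obtain ⟨l, hl, hfst⟩ := hs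
  rw [hl]
  have hlen : (l ++ v.edges).length - v.edges.length = l.length := by simp
  rw [hlen, List.take_left, G.isWalk_append]
  have hu := u.wf
  rw [hl, G.isWalk_append] at hu
  refine ⟨hu.1, ?_⟩
  rw [← hfst, hvw]
  exact w.wf

theorem isWalk_concat {p q : G.DPath} (h : q.first = p.last) :
    G.IsWalk p.first (p.edges ++ q.edges) := by
  rw [G.isWalk_append]
  refine ⟨p.wf, ?_⟩
  show G.IsWalk p.last q.edges
  rw [← h]
  exact q.wf

/-- Concatenation of composable directed paths. -/
def concatPath (p q : G.DPath) (h : q.first = p.last) : G.DPath :=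
  ⟨p.first, p.edges ++ q.edges, G.isWalk_concat h⟩

theorem isWalk_replicate (a : G.E) (h : G.tgt a = G.src a) (m : ℕ) :
    G.IsWalk (G.src a) (List.replicate m a) := by
  induction m with
  | zero => trivial
  | succ n ih => rw [List.replicate_succ, G.isWalk_cons]; exact ⟨rfl, by rw [h]; exact ih⟩

/-- The path traversing a loop `a` exactly `m` times. -/
def loopPow (a : G.E) (h : G.tgt a = G.src a) (m : ℕ) : G.DPath :=
  ⟨G.src a, List.replicate m a, G.isWalk_replicate a h m⟩

/-- `p` is a nonempty directed circuit. -/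
def IsCircuit (p : G.DPath) : Prop := p.edges ≠ [] ∧ p.last = p.first

/-- `p` and `d` share no nontrivial common prefix (initial segment). -/
def NoCommonPrefix (p d : G.DPath) : Prop :=
  ∀ l : List G.E, l ≠ [] → l <+: p.edges → ¬ l <+: d.edges

end DGraph

/-- The underlying set of the graph inverse semigroup `S(Γ)`: pairs of directed
paths with the same initial vertex, together with a zero element. -/
inductive GIS (G : DGraph) where
  | zero : GIS G
  | pair (a b : G.DPath) (h : a.first = b.first) : GIS G

namespace GIS

open scoped Classical in
/-- The multiplication of the graph inverse semigroup:
`(t,u)(v,w) = (t,pw)` if `u = pv`, `(pt,w)` if `v = pu`, and `0` otherwise. -/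
noncomputable def mul {G : DGraph} : GIS G → GIS G → GIS G
  | .zero, _ => .zero
  | .pair _ _ _, .zero => .zero
  | .pair t u h1, .pair v w h2 =>
    if hs : v.IsSuffixOf u then
      .pair t ⟨t.first, u.edges.take (u.edges.length - v.edges.length) ++ w.edges,
        by rw [h1]; exact G.isWalk_chopAppend hs h2⟩ rfl
    else if hs' : u.IsSuffixOf v then
      .pair ⟨v.first, v.edges.take (v.edges.length - u.edges.length) ++ t.edges,
        G.isWalk_chopAppend hs' h1.symm⟩ w h2
    else .zero

noncomputable instance {G : DGraph} : Mul (GIS G) := ⟨GIS.mul⟩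

/-- The inverse: `(v,w)⁻¹ = (w,v)` and `0⁻¹ = 0`. -/
def inv {G : DGraph} : GIS G → GIS G
  | .zero => .zero
  | .pair a b h => .pair b a h.symm

/-- The natural partial order: `x ≤ y` iff `x = e * y` for some idempotent `e`. -/
def le {G : DGraph} (x y : GIS G) : Prop := ∃ e : GIS G, e * e = e ∧ x = e * y

end GIS

/-- `L` is a closed inverse subsemigroup of `S(Γ)`: a nonempty subset closed under
multiplication, inverses, and upward closed in the natural partial order. -/
def IsCISS (G : DGraph) (L : Set (GIS G)) : Prop :=
  L.Nonempty ∧ (∀ a ∈ L, ∀ b ∈ L, a * b ∈ L) ∧ (∀ a ∈ L, a.inv ∈ L) ∧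
    (∀ a ∈ L, ∀ s : GIS G, GIS.le a s → s ∈ L)

/-- The closed inverse subsemigroup `↑{(u,u)}` of (finite) chain type:
all `(q,q)` with `q` a suffix of `u`. -/
def chainSet (G : DGraph) (u : G.DPath) : Set (GIS G) :=
  {x | ∃ q : G.DPath, q.IsSuffixOf u ∧ x = GIS.pair q q rfl}

/-- The edge list of the `r`-th power of the path `p`. -/
def powEdges {G : DGraph} (p : G.DPath) (r : ℕ) : List G.E :=
  (List.replicate r p.edges).flatten

/-- The closed inverse subsemigroup of cycle type
`L_{p,d} = {(v p^r d, v p^s d) : r,s ≥ 0, v a suffix of p} ∪ {(q,q) : q a suffix of d}`. -/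
def cycleSet (G : DGraph) (p d : G.DPath) : Set (GIS G) :=
  {x | (∃ (r s : ℕ) (v a b : G.DPath) (h : a.first = b.first),
          v.IsSuffixOf p ∧ x = GIS.pair a b h ∧
          a.first = v.first ∧ a.edges = v.edges ++ powEdges p r ++ d.edges ∧
          b.first = v.first ∧ b.edges = v.edges ++ powEdges p s ++ d.edges) ∨
       (∃ q : G.DPath, q.IsSuffixOf d ∧ x = GIS.pair q q rfl)}

/-- `L` is a chain of idempotents: all elements are idempotent and any two are
comparable in the natural partial order. -/
def IsChainOfIdem (G : DGraph) (L : Set (GIS G)) : Prop :=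
  (∀ x ∈ L, x * x = x) ∧ ∀ x ∈ L, ∀ y ∈ L, GIS.le x y ∨ GIS.le y x

/-- The set of right cosets `↑(Lt)` (for `t` with `t t⁻¹ ∈ L`) of a closed inverse
subsemigroup `L`. -/
def cosets (G : DGraph) (L : Set (GIS G)) : Set (Set (GIS G)) :=
  {C | ∃ t : GIS G, t * t.inv ∈ L ∧ C = {s | ∃ x ∈ L, GIS.le (x * t) s}}

/-- `H` and `K` are conjugate: for some `s`, `s⁻¹Hs ⊆ K` and `sKs⁻¹ ⊆ H`. -/
def Conjugate (G : DGraph) (H K : Set (GIS G)) : Prop :=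
  ∃ s : GIS G, (∀ h ∈ H, s.inv * h * s ∈ K) ∧ (∀ k ∈ K, s * k * s.inv ∈ H)

/-- The set of directed paths with initial vertex `v` whose first edge (if any)
is not an edge of `w`. -/
def Npaths (G : DGraph) (v : G.V) (w : G.DPath) : Set G.DPath :=
  {t | t.first = v ∧ ∀ e, t.edges.head? = some e → e ∉ w.edges}

section Aux
open DGraph

variable {G : DGraph}

lemma dpath_ext {p q : G.DPath} (h1 : p.first = q.first) (h2 : p.edges = q.edges) : p = q := by
  cases p; cases q; cases h1; cases h2; rfl

lemma pair_eq_pair {a a' b b' : G.DPath} (ha : a = a') (hb : b = b')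
    (h : a.first = b.first) (h' : a'.first = b'.first) :
    GIS.pair a b h = GIS.pair a' b' h' := by subst ha; subst hb; rfl

lemma pair_inj {a a' b b' : G.DPath} {h h'} (he : GIS.pair a b h = GIS.pair a' b' h') :
    a = a' ∧ b = b' := by injection he with h1 h2; exact ⟨h1, h2⟩

lemma pair_ne_zero {a b : G.DPath} (h : a.first = b.first) :
    GIS.pair a b h ≠ GIS.zero := fun he => by cases he

lemma zero_mul' (y : GIS G) : (GIS.zero : GIS G) * y = GIS.zero := rfl

open scoped Classical in
lemma mul_pair_pair (t u v w : G.DPath) (h1 : t.first = u.first) (h2 : v.first = w.first) :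
    (GIS.pair t u h1 : GIS G) * GIS.pair v w h2 =
      if hs : v.IsSuffixOf u then
        .pair t ⟨t.first, u.edges.take (u.edges.length - v.edges.length) ++ w.edges,
          by rw [h1]; exact G.isWalk_chopAppend hs h2⟩ rfl
      else if hs' : u.IsSuffixOf v then
        .pair ⟨v.first, v.edges.take (v.edges.length - u.edges.length) ++ t.edges,
          G.isWalk_chopAppend hs' h1.symm⟩ w h2
      else .zero := rfl

lemma sfx_refl (q : G.DPath) : q.IsSuffixOf q := ⟨[], by simp, by simp⟩

lemma sfx_len {q r : G.DPath} (h : q.IsSuffixOf r) : q.edges.length ≤ r.edges.length := by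
  obtain ⟨l, hl, -⟩ := h; simp [hl]

lemma sfx_eq {q r : G.DPath} (h : q.IsSuffixOf r) (hl : q.edges.length = r.edges.length) :
    q = r := by
  obtain ⟨l, hle, hf⟩ := h
  have hnil : l = [] := by
    have := congrArg List.length hle
    simp at this
    exact List.eq_nil_of_length_eq_zero (by omega)
  subst hnil
  simp at hle hf
  exact dpath_ext hf hle.symm

lemma sfx_take_append {q r : G.DPath} (h : q.IsSuffixOf r) :
    r.edges.take (r.edges.length - q.edges.length) ++ q.edges = r.edges := by
  obtain ⟨l, hle, -⟩ := h
  rw [hle]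
  have : (l ++ q.edges).length - q.edges.length = l.length := by simp
  rw [this, List.take_left]

/-- The empty path at a vertex. -/
abbrev eps (G : DGraph) (v : G.V) : G.DPath := ⟨v, [], trivial⟩

/-- The coset representative `(q, ε)`. -/
def tq (q : G.DPath) : GIS G := .pair q (eps G q.first) rfl

lemma eq_of_idem {a b : G.DPath} {h : a.first = b.first}
    (hid : (GIS.pair a b h : GIS G) * .pair a b h = .pair a b h) : a = b := by
  rw [mul_pair_pair] at hid
  by_cases h1 : a.IsSuffixOf b
  · rw [dif_pos h1] at hid
    obtain ⟨-, h3⟩ := pair_inj hid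
    have h4 := congrArg (List.length ∘ DPath.edges) h3
    have h5 := sfx_len h1
    simp at h4
    have : a.edges.length = b.edges.length := by omega
    exact sfx_eq h1 this
  · rw [dif_neg h1] at hid
    by_cases h2 : b.IsSuffixOf a
    · rw [dif_pos h2] at hid
      obtain ⟨h3, -⟩ := pair_inj hid
      have h4 := congrArg (List.length ∘ DPath.edges) h3
      have h5 := sfx_len h2
      simp at h4
      have : b.edges.length = a.edges.length := by omega
      exact (sfx_eq h2 this).symm
    · rw [dif_neg h2] at hid
      exact absurd hid.symm (pair_ne_zero h)

end Aux
section Aux2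
open DGraph

variable {G : DGraph}

lemma diag_mul_diag (q : G.DPath) :
    (GIS.pair q q rfl : GIS G) * .pair q q rfl = .pair q q rfl := by
  rw [mul_pair_pair, dif_pos (sfx_refl q)]
  refine pair_eq_pair rfl ?_ _ _
  exact dpath_ext rfl (by simp)

lemma diag_mul_tq (q : G.DPath) :
    (GIS.pair q q rfl : GIS G) * tq q = tq q := by
  rw [tq, mul_pair_pair, dif_pos (sfx_refl q)]
  refine pair_eq_pair rfl ?_ _ _
  exact dpath_ext rfl (by simp [eps])

lemma tq_mul_tq_inv (q : G.DPath) :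
    (tq q : GIS G) * (tq q).inv = GIS.pair q q rfl := by
  show (GIS.pair q (eps G q.first) rfl : GIS G) * GIS.pair (eps G q.first) q rfl = _
  rw [mul_pair_pair, dif_pos (sfx_refl (eps G q.first))]
  refine pair_eq_pair rfl ?_ _ _
  exact dpath_ext rfl (by simp [eps])

lemma le_diag_diag {q r : G.DPath}
    (h : GIS.le (GIS.pair q q rfl : GIS G) (GIS.pair r r rfl)) : r.IsSuffixOf q := by
  obtain ⟨e, hee, heq⟩ := h
  cases e with
  | zero => rw [zero_mul'] at heq; exact absurd heq (pair_ne_zero rfl)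
  | pair a b hab =>
    obtain rfl : a = b := eq_of_idem hee
    rw [mul_pair_pair] at heq
    by_cases h1 : r.IsSuffixOf a
    · rw [dif_pos h1] at heq
      obtain ⟨hqa, -⟩ := pair_inj heq
      rw [hqa]; exact h1
    · rw [dif_neg h1] at heq
      by_cases h2 : a.IsSuffixOf r
      · rw [dif_pos h2] at heq
        obtain ⟨-, hqr⟩ := pair_inj heq
        rw [hqr]; exact sfx_refl r
      · rw [dif_neg h2] at heq; exact absurd heq (pair_ne_zero rfl)

end Aux2
section Aux3
open DGraph

variable {G : DGraph}

lemma main_not_mem {L : Set (GIS G)} {q q' : G.DPath}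
    (hdiag : ∀ x ∈ L, ∃ r : G.DPath, x = GIS.pair r r rfl)
    (hcomp : ∀ r : G.DPath, GIS.pair r r rfl ∈ L → q.IsSuffixOf r ∨ r.IsSuffixOf q)
    (hqne : q.edges ≠ []) (hlen : q.edges.length ≠ q'.edges.length) :
    ¬ ∃ x ∈ L, GIS.le (x * tq q) (tq q') := by
  rintro ⟨x, hxL, e, hee, heq⟩
  obtain ⟨r, rfl⟩ := hdiag x hxL
  have hq0 : q.edges.length ≠ 0 := fun h => hqne (List.eq_nil_of_length_eq_zero h)
  by_cases hA : q.IsSuffixOf r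
  · rw [tq, tq, mul_pair_pair, dif_pos hA] at heq
    have l1 := sfx_len hA
    cases e with
    | zero => rw [zero_mul'] at heq; exact pair_ne_zero _ heq
    | pair s b hsb =>
      obtain rfl : s = b := eq_of_idem hee
      rw [mul_pair_pair] at heq
      by_cases h2 : q'.IsSuffixOf s
      · rw [dif_pos h2] at heq
        obtain ⟨h3, h4⟩ := pair_inj heq
        subst h3
        have e4 := congrArg (fun p : G.DPath => p.edges.length) h4
        simp [eps] at e4
        have l2 := sfx_len h2
        omega
      · rw [dif_neg h2] at heq
        by_cases h3 : s.IsSuffixOf q'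
        · rw [dif_pos h3] at heq
          obtain ⟨h4, h5⟩ := pair_inj heq
          have e4 := congrArg (fun p : G.DPath => p.edges.length) h4
          have e5 := congrArg (fun p : G.DPath => p.edges.length) h5
          simp [eps] at e4 e5
          have l3 := sfx_len h3
          omega
        · rw [dif_neg h3] at heq; exact pair_ne_zero _ heq
  · have hB : r.IsSuffixOf q := (hcomp r hxL).resolve_left hA
    rw [tq, tq, mul_pair_pair, dif_neg hA, dif_pos hB] at heq
    have l1 := sfx_len hB
    cases e with
    | zero => rw [zero_mul'] at heq; exact pair_ne_zero _ heq
    | pair s b hsb =>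
      obtain rfl : s = b := eq_of_idem hee
      rw [mul_pair_pair] at heq
      by_cases h2 : q'.IsSuffixOf s
      · rw [dif_pos h2] at heq
        obtain ⟨h3, h4⟩ := pair_inj heq
        have e3 := congrArg (fun p : G.DPath => p.edges.length) h3
        have e4 := congrArg (fun p : G.DPath => p.edges.length) h4
        simp [eps] at e3 e4
        have l2 := sfx_len h2
        omega
      · rw [dif_neg h2] at heq
        by_cases h3 : s.IsSuffixOf q'
        · rw [dif_pos h3] at heq
          obtain ⟨h4, -⟩ := pair_inj heq
          have e4 := congrArg (fun p : G.DPath => p.edges.length) h4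
          simp [eps] at e4
          have l3 := sfx_len h3
          omega
        · rw [dif_neg h3] at heq; exact pair_ne_zero _ heq

end Aux3
section Aux4
open DGraph

variable {G : DGraph}

/-- Forget the compatibility proof of a pair. -/
def toPairs : GIS G → Option (G.DPath × G.DPath)
  | .zero => none
  | .pair a b _ => some (a, b)

lemma toPairs_inj : Function.Injective (toPairs (G := G)) := by
  intro x y h
  cases x with
  | zero =>
    cases y with
    | zero => rfl
    | pair a b hab => exact absurd h (by simp [toPairs])
  | pair a b hab =>
    cases y with
    | zero => exact absurd h (by simp [toPairs])
    | pair c d hcd =>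
      simp [toPairs] at h
      exact pair_eq_pair h.1 h.2 _ _

end Aux4

/-- a closed inverse subsemigroup of infinite chain type has infinite
index in `S(Γ)`. -/
theorem stmt_16 (G : DGraph) [Fintype G.V] [Fintype G.E] (L : Set (GIS G))
    (hL : IsCISS G L) (hch : IsChainOfIdem G L) (hinf : L.Infinite) :
    (cosets G L).Infinite := by
  classical
  obtain ⟨-, -, -, hup⟩ := hL
  by_cases h0 : GIS.zero ∈ L
  · exfalso
    have hall : ∀ s, s ∈ L := fun s => hup _ h0 s ⟨GIS.zero, rfl, (zero_mul' s).symm⟩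
    have hinfP : Infinite G.DPath := by
      by_contra hfin
      rw [not_infinite_iff_finite] at hfin
      haveI := hfin
      haveI : Finite (Option (G.DPath × G.DPath)) :=
        Finite.of_equiv _ (Equiv.optionEquivSumPUnit.{0,0} (G.DPath × G.DPath)).symm
      haveI : Finite (GIS G) := Finite.of_injective toPairs toPairs_inj
      exact hinf (Set.toFinite L)
    obtain ⟨a, b, hne, hfst⟩ := Finite.exists_ne_map_eq_of_infinite
      (fun p : G.DPath => p.first)
    exact hne (eq_of_idem (hch.1 _ (hall (GIS.pair a b hfst))))
  · have hdiag : ∀ x ∈ L, ∃ r : G.DPath, x = GIS.pair r r rfl := by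
      intro x hx
      cases x with
      | zero => exact absurd hx h0
      | pair a b hab =>
        obtain rfl : a = b := eq_of_idem (hch.1 _ hx)
        exact ⟨a, pair_eq_pair rfl rfl _ _⟩
    have hcomp : ∀ a : G.DPath, GIS.pair a a rfl ∈ L → ∀ b : G.DPath,
        GIS.pair b b rfl ∈ L → a.IsSuffixOf b ∨ b.IsSuffixOf a := by
      intro a ha b hb
      rcases hch.2 _ ha _ hb with h | h
      · exact Or.inr (le_diag_diag h)
      · exact Or.inl (le_diag_diag h)
    have hQinf : ({r : G.DPath | GIS.pair r r rfl ∈ L}).Infinite := by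
      apply Set.Infinite.of_image (fun r : G.DPath => GIS.pair r r rfl)
      apply hinf.mono
      intro x hx
      obtain ⟨r, rfl⟩ := hdiag x hx
      exact ⟨r, hx, rfl⟩
    have hnilfin : {p : G.DPath | p.edges = []}.Finite := by
      apply Set.Finite.of_finite_image
        (Set.toFinite (DGraph.DPath.first '' {p : G.DPath | p.edges = []}))
      intro p hp p' hp' hfst
      exact dpath_ext hfst (hp.trans hp'.symm)
    have hQ'inf : ({r : G.DPath | GIS.pair r r rfl ∈ L} \
        {p : G.DPath | p.edges = []}).Infinite := hQinf.diff hnilfin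
    have : Infinite ↥({r : G.DPath | GIS.pair r r rfl ∈ L} \
        {p : G.DPath | p.edges = []}) := hQ'inf.to_subtype
    apply Set.infinite_of_injective_forall_mem
      (f := fun r : ↥({r : G.DPath | GIS.pair r r rfl ∈ L} \ {p : G.DPath | p.edges = []}) =>
        {s | ∃ x ∈ L, GIS.le (x * tq r.1) s})
    · intro r1 r2 hC
      by_contra hne
      have hlen : r1.1.edges.length ≠ r2.1.edges.length := by
        intro hl
        apply hne; apply Subtype.ext
        rcases hcomp _ r1.2.1 _ r2.2.1 with h | h
        · exact sfx_eq h hl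
        · exact (sfx_eq h hl.symm).symm
      have hmem2 : tq r2.1 ∈ {s | ∃ x ∈ L, GIS.le (x * tq r2.1) s} :=
        ⟨GIS.pair r2.1 r2.1 rfl, r2.2.1,
          ⟨GIS.pair r2.1 r2.1 rfl, diag_mul_diag _, rfl⟩⟩
      have hC' : {s | ∃ x ∈ L, GIS.le (x * tq r1.1) s} =
          {s | ∃ x ∈ L, GIS.le (x * tq r2.1) s} := hC
      rw [← hC'] at hmem2
      exact main_not_mem hdiag (fun r hr => hcomp _ r1.2.1 _ hr) r1.2.2 hlen hmem2
    · intro r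
      exact ⟨tq r.1, by rw [tq_mul_tq_inv]; exact r.2.1, rfl⟩
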